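/- Let Ω be an open proper subset of a length space with quasihyperbolic distance k_Ω, and let x₁, x₂ ∈ Ω with k_Ω(x₁, x₂) ≥ 1. Then d(x₁, x₂) ≥ (9/19)·max{d_Ω(x₁), d_Ω(x₂)}. -/

import Mathlib

open Set Metric Real

/-- The distance from `z` to the complement of `Ω` (i.e. to `∂Ω` for `z ∈ Ω` open). -/
noncomputable def distCompl {X : Type*} [MetricSpace X] (Ω : Set X) (z : X) : ℝ :=
  Metric.infDist z Ωᶜ

/-- An arclength-parametrized curve in `Ω` defined on `[0, L]`: it is 1-Lipschitz on
`[0, L]` (so the parameter measures arclength) and stays in `Ω`. -/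
def IsArcCurve {X : Type*} [MetricSpace X] (Ω : Set X) (γ : ℝ → X) (L : ℝ) : Prop :=
  0 ≤ L ∧ (∀ s ∈ Set.Icc (0:ℝ) L, γ s ∈ Ω) ∧
    ∀ s ∈ Set.Icc (0:ℝ) L, ∀ t ∈ Set.Icc (0:ℝ) L, dist (γ s) (γ t) ≤ |s - t|

/-- The quasihyperbolic distance in `Ω`: the infimum over arclength-parametrized
curves joining `x` and `y` in `Ω` of `∫ 1 / distCompl Ω`. -/
noncomputable def qhDist {X : Type*} [MetricSpace X] (Ω : Set X) (x y : X) : ℝ :=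
  sInf {l : ℝ | ∃ γ : ℝ → X, ∃ L : ℝ, IsArcCurve Ω γ L ∧ γ 0 = x ∧ γ L = y ∧
    l = ∫ s in (0:ℝ)..L, 1 / distCompl Ω (γ s)}

/-- The inner (length) metric of `Ω`: infimum of lengths of curves in `Ω` joining
`x` and `y`. -/
noncomputable def innerDist {X : Type*} [MetricSpace X] (Ω : Set X) (x y : X) : ℝ :=
  sInf {l : ℝ | ∃ γ : ℝ → X, ∃ L : ℝ, IsArcCurve Ω γ L ∧ γ 0 = x ∧ γ L = y ∧ l = L}

/-- A quasihyperbolic geodesic: an arclength curve each of whose subarcs realizes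
the quasihyperbolic distance between its endpoints. -/
def IsQHGeodesic {X : Type*} [MetricSpace X] (Ω : Set X) (γ : ℝ → X) (L : ℝ) : Prop :=
  IsArcCurve Ω γ L ∧ ∀ s ∈ Set.Icc (0:ℝ) L, ∀ t ∈ Set.Icc (0:ℝ) L, s ≤ t →
    (∫ u in s..t, 1 / distCompl Ω (γ u)) = qhDist Ω (γ s) (γ t)

/-- A length space: any two points are joined by curves of length arbitrarily close
to their distance. -/
def IsLengthSpace (X : Type*) [MetricSpace X] : Prop :=
  ∀ x y : X, ∀ ε : ℝ, 0 < ε → ∃ β : ℝ → X, ∃ M : ℝ, 0 ≤ M ∧ β 0 = x ∧ β M = y ∧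
    (∀ s ∈ Set.Icc (0:ℝ) M, ∀ t ∈ Set.Icc (0:ℝ) M, dist (β s) (β t) ≤ |s - t|) ∧
    M ≤ dist x y + ε

/-- If `k_Ω(x₁,x₂) ≥ 1` in a length space, then
`d(x₁,x₂) ≥ (9/19)·max{d_Ω(x₁), d_Ω(x₂)}`. -/
lemma qhDist_subset_symm {X : Type*} [MetricSpace X] (Ω : Set X) (x y : X) :
    {l : ℝ | ∃ γ : ℝ → X, ∃ L : ℝ, IsArcCurve Ω γ L ∧ γ 0 = x ∧ γ L = y ∧
      l = ∫ s in (0:ℝ)..L, 1 / distCompl Ω (γ s)} ⊆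
    {l : ℝ | ∃ γ : ℝ → X, ∃ L : ℝ, IsArcCurve Ω γ L ∧ γ 0 = y ∧ γ L = x ∧
      l = ∫ s in (0:ℝ)..L, 1 / distCompl Ω (γ s)} := by
  rintro l ⟨γ, L, ⟨hL0, hin, hlip⟩, h0, hL, hl⟩
  refine ⟨fun s => γ (L - s), L, ⟨hL0, ?_, ?_⟩, by simpa using hL, by simpa using h0, ?_⟩
  · intro s hs
    exact hin (L - s) ⟨by linarith [hs.2], by linarith [hs.1]⟩
  · intro s hs t ht
    have := hlip (L - s) ⟨by linarith [hs.2], by linarith [hs.1]⟩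
      (L - t) ⟨by linarith [ht.2], by linarith [ht.1]⟩
    calc dist (γ (L - s)) (γ (L - t)) ≤ |(L - s) - (L - t)| := this
      _ = |s - t| := by rw [show (L - s) - (L - t) = t - s by ring, abs_sub_comm]
  · rw [hl]
    have := intervalIntegral.integral_comp_sub_left
      (fun u => 1 / distCompl Ω (γ u)) L (a := 0) (b := L)
    simp only [sub_zero, sub_self] at this
    rw [this]

lemma qhDist_symm {X : Type*} [MetricSpace X] (Ω : Set X) (x y : X) :
    qhDist Ω x y = qhDist Ω y x := by
  unfold qhDist
  rw [Set.Subset.antisymm (qhDist_subset_symm Ω x y) (qhDist_subset_symm Ω y x)]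

lemma key_lemma {X : Type*} [MetricSpace X] (hX : IsLengthSpace X) (Ω : Set X)
    (hΩ : IsOpen Ω) (hprop : Ω ≠ Set.univ) (x y : X) (hx : x ∈ Ω)
    (hk : 1 ≤ qhDist Ω x y) : 9 / 19 * distCompl Ω x ≤ dist x y := by
  by_contra hcon
  push_neg at hcon
  set d := distCompl Ω x with hd_def
  have hne : Ωᶜ.Nonempty := Set.nonempty_compl.mpr hprop
  have hd : 0 < d :=
    (hΩ.isClosed_compl.notMem_iff_infDist_pos hne).mp (by simpa using hx)
  have hdy : dist x y < d / 2 := by nlinarith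
  obtain ⟨β, M, hM0, hβ0, hβM, hlip, hMle⟩ :=
    hX x y ((d / 2 - dist x y) / 2) (by linarith)
  have hM : M < d / 2 := by linarith
  have hlow : ∀ s ∈ Set.Icc (0:ℝ) M, d - M ≤ distCompl Ω (β s) := by
    intro s hs
    have h1 : dist (β s) (β 0) ≤ |s - 0| := hlip s hs 0 ⟨le_refl _, hM0⟩
    rw [hβ0, sub_zero, abs_of_nonneg hs.1] at h1
    have h2 : d ≤ distCompl Ω (β s) + dist x (β s) :=
      Metric.infDist_le_infDist_add_dist
    have : dist x (β s) ≤ M := by rw [dist_comm]; linarith [hs.2]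
    linarith
  have hin : ∀ s ∈ Set.Icc (0:ℝ) M, β s ∈ Ω := by
    intro s hs
    by_contra hnot
    have : distCompl Ω (β s) = 0 := Metric.infDist_zero_of_mem (by simpa using hnot)
    have := hlow s hs
    linarith
  have harc : IsArcCurve Ω β M := ⟨hM0, hin, hlip⟩
  -- continuity of the integrand
  have hg : LipschitzOnWith 1 (fun s => distCompl Ω (β s)) (Set.Icc (0:ℝ) M) := by
    have hβ : LipschitzOnWith 1 β (Set.Icc (0:ℝ) M) := by
      apply LipschitzOnWith.of_dist_le_mul
      intro s hs t ht
      simpa [Real.dist_eq] using hlip s hs t ht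
    simpa [distCompl, Function.comp_def] using (Metric.lipschitz_infDist_pt Ωᶜ).comp_lipschitzOnWith hβ
  have hgcont : ContinuousOn (fun s => distCompl Ω (β s)) (Set.Icc (0:ℝ) M) :=
    hg.continuousOn
  have hfcont : ContinuousOn (fun s => 1 / distCompl Ω (β s)) (Set.Icc (0:ℝ) M) := by
    apply continuousOn_const.div hgcont
    intro s hs
    have := hlow s hs
    intro h0
    rw [h0] at this
    linarith
  have hfint : IntervalIntegrable (fun s => 1 / distCompl Ω (β s))
      MeasureTheory.volume 0 M := by
    apply ContinuousOn.intervalIntegrable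
    rwa [Set.uIcc_of_le hM0]
  have hbound : (∫ s in (0:ℝ)..M, 1 / distCompl Ω (β s)) ≤ M * (1 / (d - M)) := by
    have := intervalIntegral.integral_mono_on hM0 hfint
      (intervalIntegrable_const (c := 1 / (d - M))) (fun s hs => by
        apply one_div_le_one_div_of_le (by linarith) (hlow s hs))
    simpa using this
  have hmem : (∫ s in (0:ℝ)..M, 1 / distCompl Ω (β s)) ∈
      {l : ℝ | ∃ γ : ℝ → X, ∃ L : ℝ, IsArcCurve Ω γ L ∧ γ 0 = x ∧ γ L = y ∧
        l = ∫ s in (0:ℝ)..L, 1 / distCompl Ω (γ s)} :=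
    ⟨β, M, harc, hβ0, hβM, rfl⟩
  have hbdd : BddBelow {l : ℝ | ∃ γ : ℝ → X, ∃ L : ℝ, IsArcCurve Ω γ L ∧ γ 0 = x ∧
      γ L = y ∧ l = ∫ s in (0:ℝ)..L, 1 / distCompl Ω (γ s)} := by
    refine ⟨0, ?_⟩
    rintro l ⟨γ, L, ⟨hL0, _, _⟩, _, _, hl⟩
    rw [hl]
    apply intervalIntegral.integral_nonneg hL0
    intro u _
    exact one_div_nonneg.mpr Metric.infDist_nonneg
  have hle : qhDist Ω x y ≤ M * (1 / (d - M)) :=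
    le_trans (csInf_le hbdd hmem) hbound
  have hlt : M * (1 / (d - M)) < 1 := by
    rw [mul_one_div, div_lt_one (by linarith)]
    linarith
  linarith

theorem stmt12 {X : Type*} [MetricSpace X] (hX : IsLengthSpace X) (Ω : Set X)
    (hΩ : IsOpen Ω) (hprop : Ω ≠ Set.univ) (x₁ x₂ : X) (hx₁ : x₁ ∈ Ω) (hx₂ : x₂ ∈ Ω)
    (hk : 1 ≤ qhDist Ω x₁ x₂) :
    9 / 19 * max (distCompl Ω x₁) (distCompl Ω x₂) ≤ dist x₁ x₂ := by
  rw [mul_max_of_nonneg _ _ (by norm_num : (0:ℝ) ≤ 9 / 19)]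
  apply max_le
  · exact key_lemma hX Ω hΩ hprop x₁ x₂ hx₁ hk
  · rw [dist_comm]
    exact key_lemma hX Ω hΩ hprop x₂ x₁ hx₂ (by rwa [qhDist_symm])
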